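/- arXiv:1605.05240 — 7 statements merged into one kernel-verified Lean document; each statement's English description precedes it below -/
import Mathlib

section
/- For every integer n ≥ 0, in any field of characteristic p > 3, the n-th reversed Dickson polynomial of the (k+1)-th kind satisfies D_{n,k}(1, 1/4) = (kn − k + 2)/2^n. -/
open Finset

/-- The `n`-th reversed Dickson polynomial of the `(k+1)`-th kind, evaluated at `(a, x)`.
For `n ≥ 1` it is `∑_{i=0}^{⌊n/2⌋} ((n-ki)/(n-i))·C(n-i,i)·(-x)^i·a^{n-2i}`, where the
integer coefficient `((n-ki)/(n-i))·C(n-i,i)` is written as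
`k·C(n-i,i) - (k-1)·(n/(n-i))·C(n-i,i)` and `(n/(n-i))·C(n-i,i) = C(n-i,i) + C(n-i-1,i-1)`
(equal to `1` when `i = 0`). For `n = 0` it is `2 - k`. -/
noncomputable def revDickson {F : Type*} [Field F] (k : ℤ) (n : ℕ) (a x : F) : F :=
  if n = 0 then ((2 - k : ℤ) : F) else
    ∑ i ∈ Finset.range (n / 2 + 1),
      ((k * ((n - i).choose i : ℤ) -
          (k - 1) * (if i = 0 then 1 else ((n - i).choose i : ℤ) + ((n - i - 1).choose (i - 1) : ℤ))) : F)
        * (-x) ^ i * a ^ (n - 2 * i)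

private def TT (n i : ℕ) : ℤ := (-1) ^ i * ((n - i).choose i) * 4 ^ (n - i)

private lemma TT_eq_zero {n i : ℕ} (h : n / 2 + 1 ≤ i) : TT n i = 0 := by
  have hc : (n - i).choose i = 0 := Nat.choose_eq_zero_of_lt (by omega)
  simp [TT, hc]

private lemma sumTT_ext {n N M : ℕ} (hN : n / 2 + 1 ≤ N) (hM : N ≤ M) :
    ∑ i ∈ range M, TT n i = ∑ i ∈ range N, TT n i := by
  refine (Finset.sum_subset (Finset.range_subset_range.2 hM) ?_).symm
  intro i hi hni
  simp only [Finset.mem_range, not_lt] at hni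
  exact TT_eq_zero (le_trans hN hni)

private lemma step1 (n i : ℕ) : TT (n + 2) (i + 1) = 4 * TT (n + 1) (i + 1) - 4 * TT n i := by
  rcases le_or_gt i n with h | h
  · have e1 : n + 2 - (i + 1) = (n - i) + 1 := by omega
    have e2 : n + 1 - (i + 1) = n - i := by omega
    rw [TT, TT, TT, e1, e2, Nat.choose_succ_succ]
    push_cast
    ring
  · have c1 : (n + 1 - i).choose (i + 1) = 0 := Nat.choose_eq_zero_of_lt (by omega)
    have c2 : (n - i).choose (i + 1) = 0 := Nat.choose_eq_zero_of_lt (by omega)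
    have c3 : (n - i).choose i = 0 := Nat.choose_eq_zero_of_lt (by omega)
    simp [TT, c1, c2, c3, Nat.add_sub_add_right]

private def fI (n : ℕ) : ℤ := ∑ i ∈ range (n / 2 + 1), TT n i

private lemma fI_rec (n : ℕ) : fI (n + 2) = 4 * fI (n + 1) - 4 * fI n := by
  have h2 : fI (n + 2) = ∑ i ∈ range (n + 4), TT (n + 2) i :=
    (sumTT_ext (by omega) (by omega)).symm
  have h1 : fI (n + 1) = ∑ i ∈ range (n + 4), TT (n + 1) i :=
    (sumTT_ext (by omega) (by omega)).symm
  have h0 : fI n = ∑ i ∈ range (n + 3), TT n i :=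
    (sumTT_ext (by omega) (by omega)).symm
  rw [h2, h1, h0, Finset.sum_range_succ' (TT (n+2)) (n+3),
    Finset.sum_range_succ' (TT (n+1)) (n+3)]
  have hcongr : ∑ i ∈ range (n+3), TT (n+2) (i+1)
      = ∑ i ∈ range (n+3), (4 * TT (n+1) (i+1) - 4 * TT n i) :=
    Finset.sum_congr rfl fun i _ => step1 n i
  rw [hcongr, Finset.sum_sub_distrib, ← Finset.mul_sum, ← Finset.mul_sum]
  have t2 : TT (n+2) 0 = 4 ^ (n+2) := by simp [TT]
  have t1 : TT (n+1) 0 = 4 ^ (n+1) := by simp [TT]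
  rw [t2, t1]
  ring

private lemma fI_eq (n : ℕ) : fI n = (n + 1) * 2 ^ n := by
  induction n using Nat.twoStepInduction with
  | zero => simp [fI, TT]
  | one => norm_num [fI, TT]
  | more n ih1 ih2 =>
    rw [fI_rec, ih1, ih2]
    push_cast
    ring

private def dT (n i : ℕ) : ℤ :=
  (-1) ^ i * (if i = 0 then 1 else ((n - i).choose i : ℤ) + ((n - i - 1).choose (i - 1) : ℤ))
    * 4 ^ (n - i)

private lemma step2 (m i : ℕ) (h : i ≤ m) :
    dT (m + 2) (i + 1) = TT (m + 2) (i + 1) - 4 * TT m i := by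
  have e1 : m + 2 - (i + 1) = (m - i) + 1 := by omega
  have e2 : m + 2 - (i + 1) - 1 = m - i := by omega
  rw [dT, TT, TT, if_neg (Nat.succ_ne_zero i), e1]
  simp only [Nat.add_sub_cancel]
  push_cast
  ring

private def gI (n : ℕ) : ℤ := ∑ i ∈ range (n / 2 + 1), dT n i

private lemma gI_eq (n : ℕ) (h : 1 ≤ n) : gI n = 2 ^ (n + 1) := by
  match n, h with
  | 1, _ => norm_num [gI, dT]
  | (m+2), _ =>
    have hsplit : gI (m+2) = ∑ i ∈ range ((m+2)/2), dT (m+2) (i+1) + dT (m+2) 0 :=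
      Finset.sum_range_succ' _ _
    have hterm : ∑ i ∈ range ((m+2)/2), dT (m+2) (i+1)
        = ∑ i ∈ range ((m+2)/2), (TT (m+2) (i+1) - 4 * TT m i) := by
      refine Finset.sum_congr rfl fun i hi => step2 m i ?_
      simp only [Finset.mem_range] at hi
      omega
    have hA : ∑ i ∈ range ((m+2)/2), TT (m+2) (i+1) = fI (m+2) - TT (m+2) 0 := by
      have hh : fI (m+2) = ∑ i ∈ range ((m+2)/2 + 1), TT (m+2) i := rfl
      rw [hh, Finset.sum_range_succ' (TT (m+2)) ((m+2)/2)]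
      ring
    have hB : ∑ i ∈ range ((m+2)/2), TT m i = fI m := by
      have hh : (m+2)/2 = m/2 + 1 := by omega
      rw [hh]
      rfl
    rw [hsplit, hterm, Finset.sum_sub_distrib, hA, ← Finset.mul_sum, hB, fI_eq, fI_eq]
    have t0 : TT (m+2) 0 = 4 ^ (m+2) := by simp [TT]
    have d0 : dT (m+2) 0 = 4 ^ (m+2) := by simp [dT]
    rw [t0, d0]
    push_cast
    ring

private lemma main_sum (n : ℕ) (hn : n ≠ 0) (k : ℤ) :
    ∑ i ∈ range (n / 2 + 1),
      (k * ((n - i).choose i : ℤ) -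
          (k - 1) * (if i = 0 then 1 else ((n - i).choose i : ℤ) + ((n - i - 1).choose (i - 1) : ℤ)))
        * (-1) ^ i * 4 ^ (n - i)
      = (k * n - k + 2) * 2 ^ n := by
  have hcongr : ∀ i ∈ range (n / 2 + 1),
      (k * ((n - i).choose i : ℤ) -
          (k - 1) * (if i = 0 then 1 else ((n - i).choose i : ℤ) + ((n - i - 1).choose (i - 1) : ℤ)))
        * (-1) ^ i * 4 ^ (n - i)
      = k * TT n i - (k - 1) * dT n i := by
    intro i _
    rw [TT, dT]
    ring
  rw [Finset.sum_congr rfl hcongr, Finset.sum_sub_distrib, ← Finset.mul_sum, ← Finset.mul_sum]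
  have : (∑ i ∈ range (n / 2 + 1), TT n i) = fI n := rfl
  rw [this]
  have : (∑ i ∈ range (n / 2 + 1), dT n i) = gI n := rfl
  rw [this, fI_eq, gI_eq n (by omega)]
  push_cast
  ring

theorem stmt_3 {F : Type*} [Field F] {p : ℕ} [CharP F p]
    (hp : p.Prime) (h3 : 3 < p) (k : ℤ) (n : ℕ) :
    revDickson k n 1 ((1 : F) / 4) = ((k * n - k + 2 : ℤ) : F) / 2 ^ n := by
  have h2 : (2 : F) ≠ 0 := by
    intro h
    have h' : ((2 : ℕ) : F) = 0 := by exact_mod_cast h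
    have := (CharP.cast_eq_zero_iff F p 2).1 h'
    have := Nat.le_of_dvd (by norm_num) this
    omega
  have h4 : (4 : F) ≠ 0 := by
    have : (4 : F) = 2 * 2 := by norm_num
    rw [this]
    exact mul_ne_zero h2 h2
  rcases eq_or_ne n 0 with rfl | hn
  · rw [revDickson, if_pos rfl]
    push_cast
    ring
  · rw [revDickson, if_neg hn]
    have key : ∀ i ∈ range (n / 2 + 1),
        ((k : F) * (((n - i).choose i : ℤ) : F) -
            ((k : F) - 1) *
              (((if i = 0 then 1 else ((n - i).choose i : ℤ) + ((n - i - 1).choose (i - 1) : ℤ)) : ℤ) : F))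
          * (-((1:F)/4)) ^ i * (1:F) ^ (n - 2*i)
          = (((k * ((n - i).choose i : ℤ) -
              (k - 1) * (if i = 0 then 1 else ((n - i).choose i : ℤ) + ((n - i - 1).choose (i - 1) : ℤ)))
              * (-1) ^ i * 4 ^ (n - i) : ℤ) : F) / 4 ^ n := by
      intro i hi
      simp only [Finset.mem_range] at hi
      have hin : i ≤ n := by omega
      have hpow : (4:F) ^ n = 4 ^ (n - i) * 4 ^ i := by
        rw [← pow_add]
        congr 1
        omega
      have hneg : (-((1:F)/4)) = (-1) / 4 := (neg_div 4 1).symm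
      rw [one_pow, mul_one, hneg, div_pow, hpow]
      push_cast
      field_simp
    rw [Finset.sum_congr rfl key, ← Finset.sum_div, ← Int.cast_sum,
      main_sum n hn k]
    have h2n : (2:F) ^ n ≠ 0 := pow_ne_zero _ h2
    push_cast
    rw [show (4:F) = 2 * 2 by norm_num, mul_pow]
    field_simp
end

section
/- Let y be an element of a field of characteristic p > 3 with y ≠ 1/2, and set x = y(1−y). Then for every n ≥ 0, D_{n,k}(1,x) = [((k−1)−(k−2)y)·y^n − (1+(k−2)y)·(1−y)^n] / (2y−1). -/
open Finset

def coefD (k : ℤ) (n i : ℕ) : ℤ :=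
  k * ((n - i).choose i : ℤ) -
    (k - 1) * (if i = 0 then 1 else ((n - i).choose i : ℤ) + ((n - i - 1).choose (i - 1) : ℤ))

lemma coefD_zero (k : ℤ) (n : ℕ) : coefD k n 0 = 1 := by simp [coefD]

lemma coefD_rec (k : ℤ) (n i : ℕ) (h : 2 * i ≤ n) :
    coefD k (n+2) (i+1) = coefD k (n+1) (i+1) + coefD k n i := by
  rcases i with _ | j
  · simp [coefD, Nat.choose_one_right]
    push_cast
    ring
  · obtain ⟨m, rfl⟩ : ∃ m, n = 2*j + 2 + m := ⟨n - (2*j+2), by omega⟩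
    have e1 : 2*j + 2 + m + 2 - (j + 2) = (j + 1 + m) + 1 := by omega
    have e2 : 2*j + 2 + m + 2 - (j + 2) - 1 = j + 1 + m := by omega
    have e3 : 2*j + 2 + m + 1 - (j + 2) = j + 1 + m := by omega
    have e4 : 2*j + 2 + m + 1 - (j + 2) - 1 = j + m := by omega
    have e5 : 2*j + 2 + m - (j + 1) = (j + m) + 1 := by omega
    have e6 : 2*j + 2 + m - (j + 1) - 1 = j + m := by omega
    have f1 : (j + 1 + m) + 1 - 1 = j + 1 + m := by omega
    have f2 : j + 1 + m - 1 = j + m := by omega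
    have f3 : (j + m) + 1 - 1 = j + m := by omega
    simp only [coefD, e1, e2, e3, e4, e5, e6, f1, f2, f3, if_neg (Nat.succ_ne_zero _),
      Nat.succ_sub_one]
    rw [Nat.choose_succ_succ' (j+1+m) (j+1), show j+1+m = (j+m)+1 by omega,
      Nat.choose_succ_succ' (j+m) j]
    push_cast
    ring

lemma coefD_top (k : ℤ) (m : ℕ) (hm : 1 ≤ m) : coefD k (2*m+1) (m+1) = 0 := by
  have e1 : 2*m+1 - (m+1) = m := by omega
  have e2 : 2*m+1 - (m+1) - 1 = m - 1 := by omega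
  simp only [coefD, e1, e2, if_neg (Nat.succ_ne_zero _), Nat.succ_sub_one]
  rw [Nat.choose_eq_zero_of_lt (by omega), Nat.choose_eq_zero_of_lt (by omega)]
  push_cast
  ring

lemma rev_eq_sum {F : Type*} [Field F] (k : ℤ) (n : ℕ) (hn : n ≠ 0) (x : F) :
    revDickson k n 1 x = ∑ i ∈ Finset.range (n/2+1), (coefD k n i : F) * (-x)^i := by
  rw [revDickson, if_neg hn]
  refine Finset.sum_congr rfl fun i _ => ?_
  rw [one_pow, mul_one, coefD]
  push_cast
  split_ifs <;> ring

lemma sum_rec {F : Type*} [Field F] (k : ℤ) (n : ℕ) (hn : n ≠ 0) (x : F) :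
    revDickson k (n+2) 1 x = revDickson k (n+1) 1 x - x * revDickson k n 1 x := by
  rw [rev_eq_sum k (n+2) (by omega), rev_eq_sum k (n+1) (by omega), rev_eq_sum k n hn]
  have hM : (n+2)/2 + 1 = (n/2 + 1) + 1 := by omega
  rw [hM, Finset.sum_range_succ']
  have step : ∀ i ∈ Finset.range (n/2+1),
      (coefD k (n+2) (i+1) : F) * (-x)^(i+1)
        = (coefD k (n+1) (i+1) : F) * (-x)^(i+1) + (coefD k n i : F) * (-x)^(i+1) := by
    intro i hi
    rw [Finset.mem_range] at hi
    rw [coefD_rec k n i (by omega)]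
    push_cast
    ring
  rw [Finset.sum_congr rfl step, Finset.sum_add_distrib]
  have h2 : ∑ i ∈ Finset.range (n/2+1), (coefD k n i : F) * (-x)^(i+1)
      = -x * ∑ i ∈ Finset.range (n/2+1), (coefD k n i : F) * (-x)^i := by
    rw [Finset.mul_sum]
    refine Finset.sum_congr rfl fun i _ => ?_
    ring
  rw [h2]
  have h1 : (∑ i ∈ Finset.range (n/2+1), (coefD k (n+1) (i+1) : F) * (-x)^(i+1))
      + (coefD k (n+2) 0 : F) * (-x)^0
      = ∑ i ∈ Finset.range ((n+1)/2+1), (coefD k (n+1) i : F) * (-x)^i := by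
    rcases Nat.even_or_odd n with ⟨m, hm⟩ | ⟨m, hm⟩
    · subst hm
      have hm1 : 1 ≤ m := by omega
      have hd : (m + m)/2 = m := by omega
      have hd2 : (m + m + 1)/2 + 1 = m + 1 := by omega
      have htop : ((coefD k (m+m+1) (m+1) : ℤ) : F) = 0 := by
        rw [show m+m+1 = 2*m+1 from by ring, coefD_top k m hm1]; norm_num
      rw [hd, hd2, coefD_zero, Finset.sum_range_succ, htop, zero_mul, add_zero,
        Finset.sum_range_succ' (fun i => (coefD k (m+m+1) i : F) * (-x)^i) m]
      simp [coefD_zero]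
    · subst hm
      have hd : (2*m+1)/2 = m := by omega
      have hd2 : (2*m+1+1)/2 + 1 = (m + 1) + 1 := by omega
      rw [hd, hd2, coefD_zero,
        Finset.sum_range_succ' (fun i => (coefD k (2*m+1+1) i : F) * (-x)^i) (m+1)]
      simp [coefD_zero]
  rw [add_right_comm, h1]
  ring

lemma rec_all {F : Type*} [Field F] (k : ℤ) (x : F) (n : ℕ) :
    revDickson k (n+2) 1 x = revDickson k (n+1) 1 x - x * revDickson k n 1 x := by
  rcases Nat.eq_zero_or_pos n with rfl | hn
  · rw [rev_eq_sum k 2 (by omega), rev_eq_sum k 1 (by omega)]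
    rw [revDickson, if_pos rfl]
    norm_num [Finset.sum_range_succ, coefD]
    push_cast
    ring
  · exact sum_rec k n (by omega) x

theorem stmt_4 {F : Type*} [Field F] {p : ℕ} [CharP F p]
    (hp : p.Prime) (h3 : 3 < p) (k : ℤ) (y : F) (hy : y ≠ 1 / 2) (n : ℕ) :
    revDickson k n 1 (y * (1 - y)) =
      ((((k : F) - 1) - ((k : F) - 2) * y) * y ^ n
        - (1 + ((k : F) - 2) * y) * (1 - y) ^ n) / (2 * y - 1) := by
  have h2 : (2 : F) ≠ 0 := by
    have hnd : ¬ (p ∣ 2) := fun h => by have := Nat.le_of_dvd (by norm_num) h; omega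
    intro h
    exact hnd ((CharP.cast_eq_zero_iff F p 2).mp (by exact_mod_cast h))
  have hden : 2 * y - 1 ≠ 0 := by
    intro h
    apply hy
    rw [eq_div_iff h2]
    linear_combination h
  set x : F := y * (1 - y) with hx
  set A : F := ((k : F) - 1) - ((k : F) - 2) * y with hA
  set B : F := 1 + ((k : F) - 2) * y with hB
  suffices H : ∀ m : ℕ, revDickson k m 1 x = (A * y ^ m - B * (1 - y) ^ m) / (2 * y - 1) ∧
      revDickson k (m+1) 1 x = (A * y ^ (m+1) - B * (1 - y) ^ (m+1)) / (2 * y - 1) by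
    exact (H n).1
  intro m
  induction m with
  | zero =>
    constructor
    · rw [revDickson, if_pos rfl]
      field_simp [hA, hB]
      push_cast
      ring
    · rw [rev_eq_sum k 1 (by omega)]
      norm_num [Finset.sum_range_succ, coefD]
      field_simp [hA, hB]
      push_cast
      rw [hA, hB]
      field_simp
      ring
    | succ m ih =>
      refine ⟨ih.2, ?_⟩
      rw [rec_all k x m, ih.1, ih.2]
      field_simp
      ring
end

section
/- Let F_q have characteristic p > 3 and let s ≥ 1. Then for every x in F_q, 2^{p^s}·D_{p^s,k}(1,x) + k − 2 = k·(1−4x)^{(p^s−1)/2}. -/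
open Finset

namespace RevDicksonAux

/-- The integer coefficient of `(-x)^i` in `revDickson k N a x`. -/
def Aint (k : ℤ) (N i : ℕ) : ℤ :=
  k * ((N - i).choose i : ℤ) -
    (k - 1) * (if i = 0 then 1 else ((N - i).choose i : ℤ) + ((N - i - 1).choose (i - 1) : ℤ))

lemma revDickson_eq_sum {F : Type*} [Field F] (k : ℤ) (n : ℕ) (hn : n ≠ 0) (x : F) :
    revDickson k n 1 x = ∑ i ∈ Finset.range (n / 2 + 1), ((Aint k n i : ℤ) : F) * (-x) ^ i := by
  rw [revDickson, if_neg hn]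
  refine Finset.sum_congr rfl fun i _ => ?_
  rw [one_pow, mul_one]
  unfold Aint
  split_ifs <;> push_cast <;> ring

lemma Aint_eq_zero (k : ℤ) {N i : ℕ} (hN : 2 ≤ N) (h : N < 2 * i) : Aint k N i = 0 := by
  have hi : i ≠ 0 := by omega
  have h1 : (N - i).choose i = 0 := Nat.choose_eq_zero_of_lt (by omega)
  have h2 : (N - i - 1).choose (i - 1) = 0 := Nat.choose_eq_zero_of_lt (by omega)
  simp [Aint, hi, h1, h2]

lemma Aint_rec (k : ℤ) (n i : ℕ) (hn : 2 ≤ n) (hi : i ≤ n + 1) :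
    Aint k (n + 2) i = Aint k (n + 1) i + if i = 0 then 0 else Aint k n (i - 1) := by
  rcases Nat.eq_zero_or_pos i with rfl | hpos
  · simp [Aint]
  rcases Nat.lt_or_ge i (n + 1) with hlt | hge
  · obtain ⟨j, rfl⟩ : ∃ j, i = j + 1 := ⟨i - 1, by omega⟩
    obtain ⟨m, rfl⟩ : ∃ m, n = m + j + 1 := ⟨n - j - 1, by omega⟩
    have e1 : m + j + 1 + 2 - (j + 1) = m + 2 := by omega
    have e2 : m + j + 1 + 2 - (j + 1) - 1 = m + 1 := by omega
    have e3 : m + j + 1 + 1 - (j + 1) = m + 1 := by omega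
    have e4 : m + j + 1 + 1 - (j + 1) - 1 = m := by omega
    have e5 : m + j + 1 - j = m + 1 := by omega
    have e6 : m + j + 1 - j - 1 = m := by omega
    have e7 : j + 1 - 1 = j := by omega
    simp only [Aint, e7, e1, e2, e3, e4, e5, e6, if_neg (Nat.succ_ne_zero j)]
    have p1 : ((m + 2).choose (j + 1) : ℤ) = (m + 1).choose j + (m + 1).choose (j + 1) := by
      exact_mod_cast congrArg (Nat.cast : ℕ → ℤ) (Nat.choose_succ_succ (m + 1) j)
    rcases Nat.eq_zero_or_pos j with rfl | hj
    · simp only [if_pos rfl, Nat.choose_zero_right, Nat.choose_one_right]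
      push_cast [p1, Nat.choose_zero_right]
      ring
    · obtain ⟨jj, rfl⟩ : ∃ jj, j = jj + 1 := ⟨j - 1, by omega⟩
      have p2 : ((m + 1).choose (jj + 1) : ℤ) = m.choose jj + m.choose (jj + 1) := by
        exact_mod_cast congrArg (Nat.cast : ℕ → ℤ) (Nat.choose_succ_succ m jj)
      simp only [if_neg (Nat.succ_ne_zero jj), Nat.add_sub_cancel]
      push_cast [p1, p2]
      ring
  · have hin : i = n + 1 := by omega
    subst hin
    rw [Aint_eq_zero k (by omega) (by omega), Aint_eq_zero k (by omega) (by omega),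
      Aint_eq_zero k (by omega) (by omega), if_neg (by omega)]
    ring

lemma Aint_1_0 (k : ℤ) : Aint k 1 0 = 1 := by simp [Aint]
lemma Aint_2_0 (k : ℤ) : Aint k 2 0 = 1 := by simp [Aint]
lemma Aint_2_1 (k : ℤ) : Aint k 2 1 = 2 - k := by norm_num [Aint]; ring
lemma Aint_3_0 (k : ℤ) : Aint k 3 0 = 1 := by simp [Aint]
lemma Aint_3_1 (k : ℤ) : Aint k 3 1 = 3 - k := by norm_num [Aint]; ring

section
variable {F : Type*} [Field F]

lemma revDickson_rec_ge (k : ℤ) (x : F) (n : ℕ) (hn : 2 ≤ n) :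
    revDickson k (n + 2) 1 x = revDickson k (n + 1) 1 x - x * revDickson k n 1 x := by
  set M := (n + 2) / 2 + 1 with hM
  have hsum : ∀ N : ℕ, 2 ≤ N → ∀ L : ℕ, N / 2 + 1 ≤ L →
      revDickson k N 1 x = ∑ i ∈ Finset.range L, ((Aint k N i : ℤ) : F) * (-x) ^ i := by
    intro N h2 L hL
    rw [revDickson_eq_sum k N (by omega)]
    refine Finset.sum_subset (Finset.range_subset_range.mpr hL) fun i _ hi => ?_
    have hi2 : N < 2 * i := by
      simp only [Finset.mem_range, not_lt] at hi
      omega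
    rw [Aint_eq_zero k h2 hi2]
    simp
  have h2 : revDickson k (n + 2) 1 x
      = ∑ i ∈ Finset.range (M + 1), ((Aint k (n + 2) i : ℤ) : F) * (-x) ^ i :=
    hsum (n + 2) (by omega) (M + 1) (by omega)
  have h1 : revDickson k (n + 1) 1 x
      = ∑ i ∈ Finset.range (M + 1), ((Aint k (n + 1) i : ℤ) : F) * (-x) ^ i :=
    hsum (n + 1) (by omega) (M + 1) (by omega)
  have h0 : revDickson k n 1 x
      = ∑ i ∈ Finset.range M, ((Aint k n i : ℤ) : F) * (-x) ^ i :=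
    hsum n hn M (by omega)
  have hshift : (∑ i ∈ Finset.range (M + 1),
        if i = 0 then 0 else ((Aint k n (i - 1) : ℤ) : F) * (-x) ^ i)
      = -(x * ∑ i ∈ Finset.range M, ((Aint k n i : ℤ) : F) * (-x) ^ i) := by
    rw [Finset.sum_range_succ']
    simp only [Nat.succ_ne_zero, if_false, Nat.add_sub_cancel, eq_self_iff_true, if_true, add_zero,
      Finset.mul_sum, neg_neg, ← Finset.sum_neg_distrib]
    exact Finset.sum_congr rfl fun i _ => by ring
  have hterm : ∀ i ∈ Finset.range (M + 1),
      ((Aint k (n + 2) i : ℤ) : F) * (-x) ^ i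
        = ((Aint k (n + 1) i : ℤ) : F) * (-x) ^ i
          + if i = 0 then 0 else ((Aint k n (i - 1) : ℤ) : F) * (-x) ^ i := by
    intro i hi
    have hi' : i ≤ n + 1 := by
      simp only [Finset.mem_range] at hi
      omega
    rw [Aint_rec k n i hn hi']
    split_ifs <;> push_cast <;> ring
  rw [h2, h1, h0, Finset.sum_congr rfl hterm, Finset.sum_add_distrib, hshift]
  ring

lemma revDickson_rec (k : ℤ) (x : F) (n : ℕ) :
    revDickson k (n + 2) 1 x = revDickson k (n + 1) 1 x - x * revDickson k n 1 x := by
  match n with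
  | 0 =>
    rw [revDickson_eq_sum k 2 (by norm_num), revDickson_eq_sum k 1 (by norm_num),
      show revDickson k 0 1 x = ((2 - k : ℤ) : F) from if_pos rfl]
    norm_num [Finset.sum_range_succ, Aint_1_0, Aint_2_0, Aint_2_1]
    push_cast
    ring
  | 1 =>
    rw [revDickson_eq_sum k 3 (by norm_num), revDickson_eq_sum k 2 (by norm_num),
      revDickson_eq_sum k 1 (by norm_num)]
    norm_num [Finset.sum_range_succ, Aint_1_0, Aint_2_0, Aint_2_1, Aint_3_0, Aint_3_1]
    push_cast
    ring
  | (n + 2) => exact revDickson_rec_ge k x (n + 2) (by omega)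

lemma revDickson_one (k : ℤ) (x : F) : revDickson k 1 1 x = 1 := by
  rw [revDickson_eq_sum k 1 (by norm_num), Finset.sum_range_one, Aint_1_0]
  norm_num

end

end RevDicksonAux

open RevDicksonAux Polynomial in
theorem stmt_9 {F : Type*} [Field F] [Fintype F] {p : ℕ} [CharP F p]
    (hp : p.Prime) (h3 : 3 < p) (k : ℤ) (s : ℕ) (hs : 1 ≤ s) (x : F) :
    2 ^ (p ^ s) * revDickson k (p ^ s) 1 x + (k : F) - 2 =
      (k : F) * (1 - 4 * x) ^ ((p ^ s - 1) / 2) := by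
  haveI : Fact p.Prime := ⟨hp⟩
  set c : F := 1 - 4 * x with hc
  set f : Polynomial F := X ^ 2 - C c with hf
  have hdeg : f.degree = 2 := by
    rw [hf]
    exact degree_X_pow_sub_C (by norm_num) c
  set R := AdjoinRoot f with hR
  set φ : F →+* R := AdjoinRoot.of f with hφ
  set t : R := AdjoinRoot.root f with htdef
  haveI : CharP R p :=
    charP_of_injective_ringHom
      (AdjoinRoot.of.injective_of_degree_ne_zero (by rw [hdeg]; norm_num)) p
  -- multiplication by `t` is injective on (images of) scalars
  have hreg : ∀ z : F, t * φ z = 0 → z = 0 := by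
    intro z hz
    by_contra hz0
    have hmk : AdjoinRoot.mk f (X * C z) = 0 := by
      rw [map_mul, AdjoinRoot.mk_X, AdjoinRoot.mk_C]
      exact hz
    rw [AdjoinRoot.mk_eq_zero] at hmk
    have hne : (X * C z : Polynomial F) ≠ 0 := by
      simp [hz0, X_ne_zero]
    have hd := Polynomial.degree_le_of_dvd hmk hne
    rw [hdeg, degree_mul, degree_X, degree_C hz0] at hd
    norm_num at hd
  have h2F : (2 : F) ≠ 0 := by
    have := CharP.cast_eq_zero_iff F p 2
    intro h
    have h2 : ((2 : ℕ) : F) = 0 := by exact_mod_cast h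
    have hdvd := this.mp h2
    exact absurd (Nat.le_of_dvd (by norm_num) hdvd) (by omega)
  set e : R := φ (2⁻¹ : F) with he
  have h2 : (2 : R) * e = 1 := by
    rw [show (2 : R) = φ (2 : F) from (map_ofNat φ 2).symm, he, ← map_mul,
      mul_inv_cancel₀ h2F, map_one]
  set y : R := e * (1 + t) with hy
  have ht2 : t ^ 2 = 1 - 4 * φ x := by
    have h0 : f.eval₂ φ t = 0 := AdjoinRoot.eval₂_root f
    simp only [hf, eval₂_sub, eval₂_pow, eval₂_X, eval₂_C] at h0
    have : φ c = 1 - 4 * φ x := by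
      rw [hc]
      push_cast [map_sub, map_mul, map_one, map_ofNat]
      ring
    rw [← this]
    linear_combination h0
  have hy2 : y ^ 2 = y - φ x := by
    rw [hy]
    linear_combination (e ^ 2) * ht2 + (e + e * t - 2 * e * (φ x) - φ x) * h2
  have hz2 : (1 - y) ^ 2 = (1 - y) - φ x := by linear_combination hy2
  have ht : t = 2 * y - 1 := by
    rw [hy]
    linear_combination (-(1 + t)) * h2
  -- the key induction: the functional equation for `t * revDickson k n 1 x`
  have key : ∀ n : ℕ, t * φ (revDickson k n 1 x)
      = (((k : R) - 1) - ((k : R) - 2) * y) * y ^ n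
        - (1 + ((k : R) - 2) * y) * (1 - y) ^ n := by
    intro n
    induction n using Nat.twoStepInduction with
    | zero =>
      rw [show revDickson k 0 1 x = ((2 - k : ℤ) : F) from if_pos rfl]
      have hφk : φ ((2 - k : ℤ) : F) = ((2 - k : ℤ) : R) := map_intCast φ _
      rw [hφk]
      push_cast
      linear_combination (2 - (k : R)) * ht
    | one =>
      rw [revDickson_one k x, map_one, mul_one]
      linear_combination ht
    | more n ih1 ih2 =>
      rw [revDickson_rec k x n, map_sub, map_mul, mul_sub, ← mul_assoc, mul_comm t (φ x),
        mul_assoc, ih1, ih2]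
      linear_combination
        (-((((k : R) - 1) - ((k : R) - 2) * y) * y ^ n)) * hy2
          + ((1 + ((k : R) - 2) * y) * (1 - y) ^ n) * hz2
  -- Frobenius facts
  set N := p ^ s with hN
  have hN1 : 1 ≤ N := Nat.one_le_pow s p hp.pos
  have hNodd : N % 2 = 1 := by
    have hodd : p % 2 = 1 := Nat.odd_iff.mp (hp.odd_of_ne_two (by omega))
    rw [hN, Nat.pow_mod, hodd, one_pow]
    norm_num
  set m := (N - 1) / 2 with hm
  have hm2 : 2 * m + 1 = N := by omega
  have hfrobz : (1 - y) ^ N = 1 - y ^ N := by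
    rw [hN, sub_pow_char_pow, one_pow]
  have h2N : (2 : R) ^ N = 2 := by
    rw [show (2 : R) = 1 + 1 by norm_num, hN, add_pow_char_pow, one_pow]
  have htN : t ^ N = 2 * y ^ N - 1 := by
    rw [ht, hN, sub_pow_char_pow, mul_pow, one_pow, ← hN, h2N]
  -- conclude
  have hmain : 2 ^ N * revDickson k N 1 x + (k : F) - 2 - (k : F) * (1 - 4 * x) ^ m = 0 := by
    apply hreg
    have hexp : φ (2 ^ N * revDickson k N 1 x + (k : F) - 2 - (k : F) * (1 - 4 * x) ^ m)
        = 2 ^ N * φ (revDickson k N 1 x) + (k : R) - 2 - (k : R) * (φ (1 - 4 * x)) ^ m := by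
      push_cast [map_add, map_sub, map_mul, map_pow, map_intCast, map_ofNat, map_one]
      ring
    rw [hexp]
    have hC : φ (1 - 4 * x) = t ^ 2 := by
      rw [ht2]
      push_cast [map_sub, map_mul, map_one, map_ofNat]
      ring
    have hkey := key N
    rw [hfrobz] at hkey
    calc t * (2 ^ N * φ (revDickson k N 1 x) + (k : R) - 2 - (k : R) * (φ (1 - 4 * x)) ^ m)
        = 2 ^ N * (t * φ (revDickson k N 1 x)) + ((k : R) - 2) * t
            - (k : R) * (t * (t ^ 2) ^ m) := by rw [hC]; ring
      _ = 2 * ((((k : R) - 1) - ((k : R) - 2) * y) * y ^ N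
            - (1 + ((k : R) - 2) * y) * (1 - y ^ N)) + ((k : R) - 2) * t
            - (k : R) * t ^ N := by
          rw [h2N, hkey, ← pow_mul, ← pow_succ', hm2]
      _ = 0 := by rw [htN, ht]; ring
  linear_combination hmain
end

section
/- Let q = p^e with p > 3 prime, 1 ≤ s ≤ e, and k not divisible by p. Then D_{p^s,k}(1,x) is not a permutation polynomial of F_q. -/
open Finset

section Aux
variable {R : Type*} [CommRing R]

noncomputable def ef (n : ℕ) (x : R) : R :=
  ∑ i ∈ Finset.range (n + 1), ((n - i).choose i : R) * (-x) ^ i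

lemma shift_sum (n : ℕ) (x : R) :
    (∑ i ∈ range (n + 3),
      (if i = 0 then (0 : R) else ((n + 1 - i).choose (i - 1) : R)) * (-x) ^ i) = -(x * ef n x) := by
  rw [Finset.sum_range_succ' (fun i => (if i = 0 then (0 : R) else ((n + 1 - i).choose (i - 1) : R)) * (-x) ^ i) (n + 2)]
  simp only [if_pos rfl, zero_mul, add_zero, Nat.add_sub_cancel, if_neg (Nat.succ_ne_zero _)]
  have hc : ∀ i ∈ range (n + 2), ((n + 1 - (i + 1)).choose i : R) * (-x) ^ (i + 1)
      = ((n - i).choose i : R) * (-x) ^ (i + 1) := by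
    intro i _
    have : n + 1 - (i + 1) = n - i := by omega
    rw [this]
  rw [Finset.sum_congr rfl hc, Finset.sum_range_succ]
  have : (n - (n + 1)).choose (n + 1) = 0 := by simp [Nat.choose_eq_zero_of_lt]
  rw [this]
  rw [ef, Finset.mul_sum, ← Finset.sum_neg_distrib]
  simp only [if_true, Nat.cast_zero, zero_mul, add_zero]
  refine Finset.sum_congr rfl fun i _ => ?_
  rw [pow_succ]
  ring

lemma geom_step (n : ℕ) (u v : R) :
    ∑ i ∈ range (n + 2), u ^ i * v ^ (n + 1 - i)
      = v * (∑ i ∈ range (n + 1), u ^ i * v ^ (n - i)) + u ^ (n + 1) := by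
  rw [Finset.sum_range_succ, Nat.sub_self, pow_zero, mul_one, Finset.mul_sum]
  refine congrArg (· + u ^ (n + 1)) (Finset.sum_congr rfl fun i hi => ?_)
  rw [Finset.mem_range] at hi
  have : n + 1 - i = (n - i) + 1 := by omega
  rw [this, pow_succ]
  ring

lemma geom_step' (n : ℕ) (u v : R) :
    ∑ i ∈ range (n + 2), u ^ i * v ^ (n + 1 - i)
      = u * (∑ i ∈ range (n + 1), u ^ i * v ^ (n - i)) + v ^ (n + 1) := by
  rw [Finset.sum_range_succ' (fun i => u ^ i * v ^ (n + 1 - i)) (n + 1)]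
  simp only [pow_zero, one_mul, Nat.sub_zero, Finset.mul_sum]
  refine congrArg (· + v ^ (n + 1)) (Finset.sum_congr rfl fun i hi => ?_)
  have : n + 1 - (i + 1) = n - i := by omega
  rw [this, pow_succ]
  ring

lemma geom_split (n : ℕ) (u v : R) :
    ∑ i ∈ range (n + 3), u ^ i * v ^ (n + 2 - i)
      = u ^ (n + 2) + v ^ (n + 2) + u * v * ∑ i ∈ range (n + 1), u ^ i * v ^ (n - i) := by
  have h1 := geom_step (n + 1) u v
  have h2 := geom_step' n u v
  linear_combination h1 + v * h2

lemma ef_rec (n : ℕ) (x : R) : ef (n + 2) x = ef (n + 1) x - x * ef n x := by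
  have h1 : ef (n + 1) x = ∑ i ∈ range (n + 3), ((n + 1 - i).choose i : R) * (-x) ^ i := by
    rw [ef, Finset.sum_range_succ (n := n + 2)]
    have : (n + 1 - (n + 2)).choose (n + 2) = 0 := by
      simp [Nat.choose_eq_zero_of_lt]
    rw [this]; push_cast; ring
  have h2 : (∑ i ∈ range (n + 3),
      (if i = 0 then (0 : R) else ((n + 1 - i).choose (i - 1) : R)) * (-x) ^ i) = -(x * ef n x) := by
    rw [Finset.sum_range_succ' (fun i => (if i = 0 then (0 : R) else ((n + 1 - i).choose (i - 1) : R)) * (-x) ^ i) (n + 2)]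
    simp only [if_pos rfl, zero_mul, add_zero, Nat.add_sub_cancel, if_neg (Nat.succ_ne_zero _)]
    have hc : ∀ i ∈ range (n + 2), ((n + 1 - (i + 1)).choose i : R) * (-x) ^ (i + 1)
        = ((n - i).choose i : R) * (-x) ^ (i + 1) := by
      intro i _
      have : n + 1 - (i + 1) = n - i := by omega
      rw [this]
    rw [Finset.sum_congr rfl hc, Finset.sum_range_succ]
    have : (n - (n + 1)).choose (n + 1) = 0 := by simp [Nat.choose_eq_zero_of_lt]
    rw [this]
    rw [ef, Finset.mul_sum, ← Finset.sum_neg_distrib]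
    simp only [if_true, Nat.cast_zero, zero_mul, add_zero]
    refine Finset.sum_congr rfl fun i _ => ?_
    rw [pow_succ]
    ring
  have key : ef (n + 2) x = (∑ i ∈ range (n + 3), ((n + 1 - i).choose i : R) * (-x) ^ i)
      + ∑ i ∈ range (n + 3), (if i = 0 then (0 : R) else ((n + 1 - i).choose (i - 1) : R)) * (-x) ^ i := by
    rw [ef, ← Finset.sum_add_distrib]
    refine Finset.sum_congr rfl fun i hi => ?_
    rw [Finset.mem_range] at hi
    match i with
    | 0 => simp
    | (j + 1) =>
      simp only [Nat.add_sub_cancel, if_neg (Nat.succ_ne_zero _)]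
      rcases Nat.lt_or_ge j (n + 1) with h | h
      · have e1 : n + 2 - (j + 1) = (n - j) + 1 := by omega
        have e2 : n + 1 - (j + 1) = n - j := by omega
        rw [e1, e2, Nat.choose_succ_succ]
        push_cast; ring
      · have hj : j = n + 1 := by omega
        subst hj
        have e1 : n + 2 - (n + 1 + 1) = 0 := by omega
        have e2 : n + 1 - (n + 1 + 1) = 0 := by omega
        rw [e1, e2]
        simp [Nat.choose_eq_zero_of_lt]
  rw [key, h2, ← h1]; ring


lemma ef_geom (n : ℕ) {u v : R} (huv : u + v = 1) :
    ef n (u * v) = ∑ i ∈ range (n + 1), u ^ i * v ^ (n - i) := by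
  induction n using Nat.strong_induction_on with
  | _ n ih =>
    match n with
    | 0 => simp [ef]
    | 1 =>
      have h : ef 1 (u * v) = 1 := by
        rw [ef]
        simp [Finset.sum_range_succ]
      rw [h, Finset.sum_range_succ, Finset.sum_range_one]
      norm_num
      linear_combination -huv
    | (n + 2) =>
      rw [ef_rec, ih (n + 1) (by omega), ih n (by omega)]
      have ha := geom_step n u v
      have hb := geom_step (n + 1) u v
      set S0 := ∑ i ∈ range (n + 1), u ^ i * v ^ (n - i) with hS0
      set S1 := ∑ i ∈ range (n + 2), u ^ i * v ^ (n + 1 - i) with hS1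
      set S2 := ∑ i ∈ range (n + 3), u ^ i * v ^ (n + 2 - i) with hS2
      linear_combination u * ha - hb - S1 * huv

end Aux

section Bridge
variable {F : Type*} [Field F]

lemma revDickson_eq (k : ℤ) (m : ℕ) (x : F) :
    revDickson k (m + 2) 1 x
      = (k : F) * ef (m + 2) x - ((k : F) - 1) * (ef (m + 2) x - x * ef m x) := by
  rw [revDickson, if_neg (by omega)]
  have hsub : Finset.range ((m + 2) / 2 + 1) ⊆ Finset.range (m + 3) := by
    apply Finset.range_subset_range.2
    omega
  rw [Finset.sum_subset hsub ?hz]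
  case hz =>
    intro i hi hni
    rw [Finset.mem_range] at hi
    rw [Finset.mem_range, not_lt] at hni
    have h2i : m + 2 < 2 * i := by omega
    have hi0 : i ≠ 0 := by omega
    have c1 : (m + 2 - i).choose i = 0 := Nat.choose_eq_zero_of_lt (by omega)
    have c2 : (m + 2 - i - 1).choose (i - 1) = 0 := Nat.choose_eq_zero_of_lt (by omega)
    rw [if_neg hi0, c1, c2]
    push_cast
    ring
  have hterm : ∀ i ∈ Finset.range (m + 3),
      ((k * ((m + 2 - i).choose i : ℤ) -
          (k - 1) * (if i = 0 then 1 else ((m + 2 - i).choose i : ℤ) + ((m + 2 - i - 1).choose (i - 1) : ℤ))) : F)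
        * (-x) ^ i * (1 : F) ^ (m + 2 - 2 * i)
      = (k : F) * (((m + 2 - i).choose i : F) * (-x) ^ i)
        - ((k : F) - 1) * (((m + 2 - i).choose i : F) * (-x) ^ i
            + (if i = 0 then (0 : F) else ((m + 1 - i).choose (i - 1) : F)) * (-x) ^ i) := by
    intro i _
    rw [one_pow, mul_one]
    match i with
    | 0 =>
      simp only [if_pos rfl, Nat.choose_zero_right]
      push_cast
      ring
    | (j + 1) =>
      simp only [if_neg (Nat.succ_ne_zero _)]
      have : m + 2 - (j + 1) - 1 = m + 1 - (j + 1) := by omega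
      rw [this]
      push_cast
      ring
  rw [Finset.sum_congr rfl hterm, Finset.sum_sub_distrib, ← Finset.mul_sum, ← Finset.mul_sum,
    Finset.sum_add_distrib, shift_sum, ef, ef]
  ring

lemma ef_geom' {R : Type*} [CommRing R] (n : ℕ) {u v x : R} (huv : u + v = 1) (hx : u * v = x) :
    ef n x = ∑ i ∈ range (n + 1), u ^ i * v ^ (n - i) := by
  rw [← hx]; exact ef_geom n huv

lemma rev_charP {K : Type*} [Field K] (p : ℕ) [Fact p.Prime] [CharP K p] (hodd : p ≠ 2)
    (s : ℕ) (hs : 1 ≤ s) (k : ℤ) (u x : K) (hux : u * (1 - u) = x) :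
    (2 : K) * revDickson k (p ^ s) 1 x
      = (k : K) * (1 - 4 * x) ^ ((p ^ s - 1) / 2) - (k : K) + 2 := by
  have hp := (Fact.out : p.Prime)
  have hp2 : 2 < p := lt_of_le_of_ne hp.two_le (Ne.symm hodd)
  set v : K := 1 - u with hv
  have huv : u + v = 1 := by rw [hv]; ring
  set n := p ^ s with hn
  have hn3 : 3 ≤ n := by
    calc 3 ≤ p := hp2
    _ = p ^ 1 := (pow_one p).symm
    _ ≤ p ^ s := Nat.pow_le_pow_right hp.pos hs
  have hodd_n : Odd n := Odd.pow (Nat.Prime.odd_of_ne_two hp hodd)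
  set m := (n - 1) / 2 with hm
  have hm2 : n = 2 * m + 1 := by
    obtain ⟨t, ht⟩ := hodd_n
    omega
  have hm1 : 1 ≤ m := by omega
  obtain ⟨m2, hm2'⟩ : ∃ m2, n = m2 + 2 := ⟨n - 2, by omega⟩
  -- the geometric sums
  set S : K := ∑ i ∈ range (n + 1), u ^ i * v ^ (n - i) with hS
  have hE : ef n x = S := ef_geom' n huv hux
  have hE0 : ef m2 x = ∑ i ∈ range (m2 + 1), u ^ i * v ^ (m2 - i) := ef_geom' m2 huv hux
  -- D identity
  have hD1 : ef n x - x * ef m2 x = u ^ n + v ^ n := by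
    rw [hE, hE0, hS, hm2']
    have := geom_split m2 u v
    rw [← hux]
    linear_combination this
  have hfrob : u ^ n + v ^ n = 1 := by
    have := add_pow_char_pow (R := K) (p := p) (n := s) u v
    rw [huv, one_pow] at this
    exact this.symm
  -- 2S = (1-4x)^m + 1
  have hsq : (u - v) ^ 2 = 1 - 4 * x := by rw [← hux, hv]; ring
  have hgeom : S * (u - v) = u ^ (n + 1) - v ^ (n + 1) := by
    have := geom_sum₂_mul u v (n + 1)
    simp only [Nat.add_sub_cancel] at this
    rw [hS]
    exact this
  have hsubpow : (u - v) ^ n = u ^ n - v ^ n := by rw [hn]; exact sub_pow_char_pow u v s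
  have hkey : 2 * S * (u - v) = ((1 - 4 * x) ^ m + 1) * (u - v) := by
    have hr : 2 * (u ^ (n + 1) - v ^ (n + 1))
        = (u + v) * (u ^ n - v ^ n) + (u ^ n + v ^ n) * (u - v) := by ring
    have hpow : (u - v) ^ n = (1 - 4 * x) ^ m * (u - v) := by
      rw [hm2, pow_succ, pow_mul, hsq]
    calc 2 * S * (u - v) = 2 * (u ^ (n + 1) - v ^ (n + 1)) := by
          rw [← hgeom]; ring
      _ = (u + v) * (u ^ n - v ^ n) + (u ^ n + v ^ n) * (u - v) := hr
      _ = (u - v) ^ n + (u - v) := by rw [huv, hfrob, hsubpow]; ring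
      _ = ((1 - 4 * x) ^ m + 1) * (u - v) := by rw [hpow]; ring
  have h2S : 2 * S = (1 - 4 * x) ^ m + 1 := by
    rcases eq_or_ne (u - v) 0 with hw | hw
    · -- u = v, 1 - 4x = 0
      have hx0 : 1 - 4 * x = 0 := by rw [← hsq, hw]; ring
      have hvu : v = u := (sub_eq_zero.mp hw).symm
      have hSu : S = (n + 1) * u ^ n := by
        rw [hS, hvu]
        have := geom_sum₂_self u (n + 1)
        simp only [Nat.add_sub_cancel] at this
        push_cast at this
        exact this
      have h2u : 2 * u = 1 := by rw [hvu] at huv; linear_combination huv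
      have h2n : (2 : K) ^ n = 2 := by
        have h := add_pow_char_pow (R := K) (p := p) (n := s) (1 : K) 1
        norm_num at h
        rw [hn]
        exact h
      have hun : 2 * u ^ n = 1 := by
        calc 2 * u ^ n = 2 ^ n * u ^ n := by rw [h2n]
          _ = (2 * u) ^ n := (mul_pow 2 u n).symm
          _ = 1 := by rw [h2u, one_pow]
      have hcast : ((n : K) + 1) = 1 := by
        have : (n : K) = 0 := by
          rw [hn]
          push_cast
          rw [CharP.cast_eq_zero K p]
          exact zero_pow (by omega)
        rw [this, zero_add]
      rw [hx0, zero_pow (by omega), zero_add, hSu]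
      push_cast at hcast ⊢
      calc 2 * ((↑n + 1) * u ^ n) = (↑n + 1) * (2 * u ^ n) := by ring
        _ = 1 := by rw [hcast, hun, one_mul]
    · exact mul_right_cancel₀ hw hkey
  -- assemble
  rw [hm2', revDickson_eq, ← hm2']
  rw [hD1, hfrob, hE]
  linear_combination (k : K) * h2S

end Bridge

lemma map_revDickson {F K : Type*} [Field F] [Field K] (φ : F →+* K) (k : ℤ) (n : ℕ) (x : F) :
    φ (revDickson k n 1 x) = revDickson k n 1 (φ x) := by
  rcases eq_or_ne n 0 with h | h
  · simp [revDickson, h, map_ofNat]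
  · simp only [revDickson, if_neg h, map_sum, map_mul, map_pow, map_neg, map_one, map_sub,
      map_add, map_intCast, map_natCast, map_ofNat, apply_ite φ]

-- existence of u with u(1-u)=y in an alg closed field
lemma exists_u {K : Type*} [Field K] [IsAlgClosed K] (y : K) : ∃ u : K, u * (1 - u) = y := by
  obtain ⟨u, hu⟩ := IsAlgClosed.exists_root (Polynomial.X ^ 2 - Polynomial.X + Polynomial.C y)
    (by
      have : (Polynomial.X ^ 2 - Polynomial.X + Polynomial.C y : Polynomial K).degree = 2 := by
        compute_degree!
      rw [this]; norm_num)
  refine ⟨u, ?_⟩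
  have := hu
  simp only [Polynomial.IsRoot, Polynomial.eval_add, Polynomial.eval_sub, Polynomial.eval_pow,
    Polynomial.eval_X, Polynomial.eval_C] at this
  linear_combination -this

theorem stmt_10 {F : Type*} [Field F] [Fintype F] {p e : ℕ} [CharP F p]
    (hp : p.Prime) (h3 : 3 < p) (hcard : Fintype.card F = p ^ e)
    (s : ℕ) (hs : 1 ≤ s) (hse : s ≤ e) (k : ℤ) (hk : ¬ ((p : ℤ) ∣ k)) :
    ¬ Function.Bijective (fun x : F => revDickson k (p ^ s) 1 x) := by
  intro hbij
  haveI : Fact p.Prime := ⟨hp⟩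
  haveI : DecidableEq F := Classical.decEq F
  have hodd : p ≠ 2 := by omega
  set m := (p ^ s - 1) / 2 with hm
  -- find ζ ≠ 1 in F with ζ ^ m = 1
  set r := (p - 1) / 2 with hr
  have hpodd : p % 2 = 1 := Nat.odd_iff.mp (hp.odd_of_ne_two hodd)
  have hr2 : 2 ≤ r := by omega
  have h2r : 2 * r = p - 1 := by omega
  have hps1 : 1 ≤ p ^ s := Nat.one_le_pow _ _ hp.pos
  have hpe1 : 1 ≤ p ^ e := Nat.one_le_pow _ _ hp.pos
  have hpsodd : p ^ s % 2 = 1 := Nat.odd_iff.mp (Odd.pow (Nat.odd_iff.mpr hpodd))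
  have h2m : 2 * m = p ^ s - 1 := by omega
  have hdvd1 : p - 1 ∣ p ^ s - 1 := by
    simpa using Nat.sub_dvd_pow_sub_pow p 1 s
  have hdvd2 : p - 1 ∣ p ^ e - 1 := by
    simpa using Nat.sub_dvd_pow_sub_pow p 1 e
  have hrm : r ∣ m := by
    have : 2 * r ∣ 2 * m := by rw [h2r, h2m]; exact hdvd1
    exact (Nat.mul_dvd_mul_iff_left (by norm_num : 0 < 2)).mp this
  have hrq : r ∣ Fintype.card Fˣ := by
    rw [Fintype.card_units, hcard]
    exact dvd_trans ⟨2, by omega⟩ hdvd2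
  set N := Fintype.card Fˣ with hN
  have hN0 : 0 < N := Fintype.card_pos
  obtain ⟨g, hg⟩ := IsCyclic.exists_generator (α := Fˣ)
  set ζ : Fˣ := g ^ (N / r) with hζ
  have hordg : orderOf g = N := by
    rw [orderOf_eq_card_of_forall_mem_zpowers hg, Nat.card_eq_fintype_card]
  have hζ1 : ζ ≠ 1 := by
    intro h1
    have hdvd : orderOf g ∣ N / r := orderOf_dvd_of_pow_eq_one h1
    rw [hordg] at hdvd
    have hlt : N / r < N := Nat.div_lt_self hN0 hr2
    have hpos : 0 < N / r := Nat.div_pos (Nat.le_of_dvd hN0 hrq) (by omega)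
    exact absurd (Nat.le_of_dvd hpos hdvd) (by omega)
  have hζm : ζ ^ m = 1 := by
    obtain ⟨c, hc⟩ := hrm
    rw [hζ, ← pow_mul]
    have : N / r * m = N * c := by
      rw [hc, ← mul_assoc, Nat.div_mul_cancel hrq]
    rw [this, pow_mul, pow_card_eq_one, one_pow]
  -- transfer to F
  have h4 : (4 : F) ≠ 0 := by
    intro h
    have := (CharP.cast_eq_zero_iff F p 4).mp (by exact_mod_cast h)
    have := Nat.le_of_dvd (by norm_num) this
    omega
  set a : F := (ζ : F) with ha
  have ha1 : a ≠ 1 := by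
    intro h
    exact hζ1 (Units.ext (by rw [← ha, h, Units.val_one]))
  have ham : a ^ m = 1 := by
    rw [ha, ← Units.val_pow_eq_pow_val, hζm, Units.val_one]
  set x2 : F := (1 - a) / 4 with hx2
  have hx2ne : x2 ≠ 0 := by
    rw [hx2, div_ne_zero_iff]
    exact ⟨sub_ne_zero.mpr (Ne.symm ha1), h4⟩
  -- algebraic closure
  set K := AlgebraicClosure F with hK
  haveI : CharP K p := charP_of_injective_algebraMap (algebraMap F K).injective p
  set φ : F →+* K := algebraMap F K with hφ
  have hφinj : Function.Injective φ := φ.injective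
  have hval : ∀ y : F, (2 : K) * φ (revDickson k (p ^ s) 1 y)
      = (k : K) * (1 - 4 * φ y) ^ m - (k : K) + 2 := by
    intro y
    obtain ⟨u, hu⟩ := exists_u (φ y)
    rw [map_revDickson]
    exact rev_charP p hodd s hs k u (φ y) hu
  have hval0 := hval 0
  have hval2 := hval x2
  have hxcalc : (1 : F) - 4 * x2 = a := by
    rw [hx2]
    field_simp
    ring
  have heq2 : (1 : K) - 4 * φ x2 = φ a := by
    have h := congrArg φ hxcalc
    simpa [map_sub, map_mul, map_one, map_ofNat] using h
  have hpow2 : ((1 : K) - 4 * φ x2) ^ m = 1 := by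
    rw [heq2, ← map_pow, ham, map_one]
  have h2K : (2 : K) ≠ 0 := by
    intro h
    have hd := (CharP.cast_eq_zero_iff K p 2).mp (by exact_mod_cast h)
    have := Nat.le_of_dvd (by norm_num) hd
    omega
  have hveq : φ (revDickson k (p ^ s) 1 (0 : F)) = φ (revDickson k (p ^ s) 1 x2) := by
    apply mul_left_cancel₀ h2K
    rw [hval0, hval2, hpow2, map_zero]
    norm_num
  have hfeq : revDickson k (p ^ s) 1 (0 : F) = revDickson k (p ^ s) 1 x2 := hφinj hveq
  have : (0 : F) = x2 := hbij.injective hfeq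
  exact hx2ne this.symm
end

section
/- Let q = p^e, p > 3 prime, and let f(y) = [((k−1)−(k−2)y)·y^n − (1+(k−2)y)·(1−y)^n]/(2y−1) be defined on (F_q ∪ V)∖{1/2}, where V = {x ∈ F_{q²} : x^q = 1−x}. Then D_{n,k}(1,x) is a permutation polynomial of F_q if and only if f is 2-to-1 on (F_q ∪ V)∖{1/2} and f(y) ≠ (kn−k+2)/2^n for every y in (F_q ∪ V)∖{1/2}. -/
open Finset

/-- integer coefficient -/
def rdCoeff (k : ℤ) (n i : ℕ) : ℤ :=
  k * ((n - i).choose i : ℤ) -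
    (k - 1) * (if i = 0 then 1 else ((n - i).choose i : ℤ) + ((n - i - 1).choose (i - 1) : ℤ))

lemma revDickson_eq_sum {F : Type*} [Field F] (k : ℤ) (n : ℕ) (hn : n ≠ 0) (x : F) :
    revDickson k n 1 x = ∑ i ∈ Finset.range (n / 2 + 1), (rdCoeff k n i : F) * (-x) ^ i := by
  simp [revDickson, hn, rdCoeff]

lemma rdCoeff_zero (k : ℤ) (n : ℕ) : rdCoeff k n 0 = 1 := by simp [rdCoeff]

lemma rdCoeff_pascal (k : ℤ) (n j : ℕ) (hj : j + 1 ≤ n) :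
    rdCoeff k (n + 2) (j + 1) = rdCoeff k (n + 1) (j + 1) + rdCoeff k n j := by
  rcases Nat.eq_zero_or_pos j with rfl | hjpos
  · have h1 : n + 2 - 1 = n + 1 := by omega
    have h2 : n + 1 - 1 = n := by omega
    have h3 : n + 2 - 1 - 1 = n := by omega
    have h4 : n + 1 - 1 - 1 = n - 1 := by omega
    simp only [rdCoeff, h1, h2, h3, h4, if_neg (Nat.one_ne_zero), if_pos rfl]
    rw [Nat.choose_one_right, Nat.choose_one_right, Nat.choose_zero_right,
      Nat.choose_zero_right, Nat.choose_zero_right]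
    push_cast
    ring
  · have e1 : n + 2 - (j + 1) = (n - j) + 1 := by omega
    have e2 : n + 2 - (j + 1) - 1 = n - j := by omega
    have e3 : n + 1 - (j + 1) = n - j := by omega
    have e4 : n + 1 - (j + 1) - 1 = n - j - 1 := by omega
    have e5 : n - j = (n - j - 1) + 1 := by omega
    obtain ⟨t, rfl⟩ : ∃ t, j = t + 1 := ⟨j - 1, by omega⟩
    simp only [rdCoeff, e1, e2, e3, e4, if_neg (Nat.succ_ne_zero _), Nat.add_sub_cancel]
    rw [Nat.choose_succ_succ ((n - (t+1))) (t + 1), e5, Nat.choose_succ_succ (n - (t+1) - 1) t]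
    push_cast
    ring

lemma rdCoeff_top (k : ℤ) (n : ℕ) (hn : 2 ≤ n) (he : n % 2 = 0) :
    rdCoeff k (n + 1) (n / 2 + 1) = 0 := by
  have e1 : n + 1 - (n / 2 + 1) = n / 2 := by omega
  have e2 : n + 1 - (n / 2 + 1) - 1 = n / 2 - 1 := by omega
  have c1 : (n / 2).choose (n / 2 + 1) = 0 := Nat.choose_eq_zero_of_lt (by omega)
  have c2 : (n / 2 - 1).choose (n / 2) = 0 := Nat.choose_eq_zero_of_lt (by omega)
  simp [rdCoeff, e1, e2, c1, c2]

lemma revDickson_rec {F : Type*} [Field F] (k : ℤ) (n : ℕ) (x : F) :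
    revDickson k (n + 2) 1 x = revDickson k (n + 1) 1 x - x * revDickson k n 1 x := by
  rcases Nat.eq_zero_or_pos n with rfl | hn
  · rw [revDickson_eq_sum k 2 (by norm_num), revDickson_eq_sum k 1 (by norm_num)]
    simp [revDickson, Finset.sum_range_succ, rdCoeff]
    push_cast
    ring
  · have hN : (n + 2) / 2 + 1 = (n / 2 + 1) + 1 := by omega
    rw [revDickson_eq_sum k (n+2) (by omega), revDickson_eq_sum k (n+1) (by omega),
      revDickson_eq_sum k n (by omega), hN, Finset.sum_range_succ']
    simp only [rdCoeff_zero, pow_zero, Int.cast_one, one_mul]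
    have hstep : ∀ j ∈ Finset.range (n / 2 + 1),
        (rdCoeff k (n + 2) (j + 1) : F) * (-x) ^ (j + 1)
          = (rdCoeff k (n + 1) (j + 1) : F) * (-x) ^ (j + 1)
            + (-x) * ((rdCoeff k n j : F) * (-x) ^ j) := by
      intro j hj
      rw [Finset.mem_range] at hj
      have hj1 : j + 1 ≤ n := by omega
      rw [rdCoeff_pascal k n j hj1]
      push_cast
      ring
    rw [Finset.sum_congr rfl hstep, Finset.sum_add_distrib, ← Finset.mul_sum]
    set g : ℕ → F := fun i => (rdCoeff k (n+1) i : F) * (-x) ^ i with hg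
    have f0 : g 0 = 1 := by simp [hg, rdCoeff_zero]
    have hfirst : (∑ j ∈ Finset.range (n / 2 + 1), g (j+1)) + 1
        = ∑ i ∈ Finset.range ((n+1) / 2 + 1), g i := by
      rw [← f0, ← Finset.sum_range_succ' g (n/2+1)]
      rcases Nat.even_or_odd n with he | ho
      · have hmod : n % 2 = 0 := Nat.even_iff.mp he
        have hr : (n + 1) / 2 + 1 = n / 2 + 1 := by omega
        rw [hr, Finset.sum_range_succ g (n/2+1)]
        have htop : rdCoeff k (n+1) (n/2+1) = 0 := rdCoeff_top k n (by omega) hmod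
        simp [hg, htop]
      · have hmod : n % 2 = 1 := Nat.odd_iff.mp ho
        have hr : (n + 1) / 2 + 1 = n / 2 + 1 + 1 := by omega
        rw [hr]
    rw [← hfirst]
    ring

lemma revDickson_identity {F : Type*} [Field F] (k : ℤ) (n : ℕ) (y : F) :
    (2 * y - 1) * revDickson k n 1 (y * (1 - y))
      = (((k : F) - 1) - ((k : F) - 2) * y) * y ^ n - (1 + ((k : F) - 2) * y) * (1 - y) ^ n := by
  induction n using Nat.strong_induction_on with
  | _ n ih =>
    match n with
    | 0 => simp [revDickson]; ring
    | 1 =>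
      rw [revDickson_eq_sum k 1 (by norm_num)]
      simp [rdCoeff]
      ring
    | (m + 2) =>
      rw [revDickson_rec]
      have h1 := ih (m + 1) (by omega)
      have h0 := ih m (by omega)
      have e1 : y ^ (m + 1) = y ^ m * y := pow_succ y m
      have e2 : (1 - y) ^ (m + 1) = (1 - y) ^ m * (1 - y) := pow_succ (1 - y) m
      have e3 : y ^ (m + 2) = y ^ m * y * y := by rw [pow_succ, pow_succ]
      have e4 : (1 - y) ^ (m + 2) = (1 - y) ^ m * (1 - y) * (1 - y) := by rw [pow_succ, pow_succ]
      rw [e3, e4]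
      rw [e1] at h1; rw [e2] at h1
      linear_combination h1 - (y * (1 - y)) * h0

lemma revDickson_quarter_aux {F : Type*} [Field F] (k : ℤ) (u : F) (hu : 4 * u = 1) (n : ℕ) :
    revDickson k n 1 u * 2 ^ n = ((k * n - k + 2 : ℤ) : F) := by
  induction n using Nat.strong_induction_on with
  | _ n ih =>
    match n with
    | 0 => simp [revDickson]; push_cast; ring
    | 1 =>
      rw [revDickson_eq_sum k 1 (by norm_num)]
      simp [rdCoeff]
    | (m + 2) =>
      rw [revDickson_rec]
      have h1 := ih (m + 1) (by omega)
      have h0 := ih m (by omega)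
      push_cast at h1 h0 ⊢
      have e1 : (2:F) ^ (m + 1) = 2 ^ m * 2 := pow_succ 2 m
      have e2 : (2:F) ^ (m + 2) = 2 ^ m * 2 * 2 := by rw [pow_succ, pow_succ]
      rw [e2]; rw [e1] at h1
      linear_combination 2 * h1 - (4 * u) * h0 - (((k:F) * m - (k:F) + 2)) * hu

lemma revDickson_quarter {F : Type*} [Field F] (k : ℤ) (n : ℕ) (h2 : (2 : F) ≠ 0) :
    revDickson k n 1 (1 / 4 : F) * 2 ^ n = ((k * n - k + 2 : ℤ) : F) := by
  have h4 : (4 : F) ≠ 0 := by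
    intro h
    apply h2
    have h22 : (4 : F) = 2 * 2 := by norm_num
    rw [h22] at h
    rcases mul_eq_zero.mp h with h | h <;> exact h
  exact revDickson_quarter_aux k _ (by field_simp) n

lemma revDickson_map {K L : Type*} [Field K] [Field L] (g : K →+* L) (k : ℤ) (n : ℕ) (x : K) :
    g (revDickson k n 1 x) = revDickson k n 1 (g x) := by
  by_cases hn : n = 0
  · simp only [revDickson, hn, if_true, if_pos rfl, map_intCast]
  · rw [revDickson_eq_sum k n hn, revDickson_eq_sum k n hn, map_sum]
    congr 1
    ext i
    rw [map_mul, map_pow, map_neg, map_intCast]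

lemma quad_factor {F : Type*} [Field F] {y₁ y₂ : F} (h : y₁ * (1 - y₁) = y₂ * (1 - y₂)) :
    y₁ = y₂ ∨ y₁ = 1 - y₂ := by
  have : (y₁ - y₂) * (y₁ + y₂ - 1) = 0 := by linear_combination -h
  rcases mul_eq_zero.mp this with h | h
  · left; exact sub_eq_zero.mp h
  · right; linear_combination h

open Polynomial in
lemma fixed_iff {K L : Type*} [Field K] [Field L] [Fintype K] [Fintype L] [Algebra K L]
    (q : ℕ) (hq : Fintype.card K = q) (z : L) :
    z ^ q = z ↔ z ∈ (algebraMap K L).range := by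
  have hq2 : 1 < q := hq ▸ Fintype.one_lt_card
  have hrange : ∀ a : K, (algebraMap K L a) ^ q = algebraMap K L a := fun a => by
    rw [← map_pow, ← hq, FiniteField.pow_card]
  classical
  constructor
  · intro hz
    -- counting argument
    set T : Finset L := Finset.univ.filter (fun w => w ^ q = w) with hT
    set R : Finset L := Finset.univ.image (algebraMap K L) with hR
    have hRT : R ⊆ T := by
      intro w hw
      rw [hR, Finset.mem_image] at hw
      obtain ⟨a, _, rfl⟩ := hw
      simp [hT, hrange a]
    have hTcard : T.card ≤ q := by
      have hsub : T ⊆ (X ^ q - X : L[X]).roots.toFinset := by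
        intro w hw
        rw [Multiset.mem_toFinset, Polynomial.mem_roots
          (FiniteField.X_pow_card_sub_X_ne_zero L hq2)]
        simp only [hT, Finset.mem_filter] at hw
        simp [sub_eq_zero, hw.2]
      calc T.card ≤ (X ^ q - X : L[X]).roots.toFinset.card := Finset.card_le_card hsub
        _ ≤ Multiset.card (X ^ q - X : L[X]).roots := Multiset.toFinset_card_le _
        _ ≤ (X ^ q - X : L[X]).natDegree := Polynomial.card_roots' _
        _ = q := FiniteField.X_pow_card_sub_X_natDegree_eq L hq2
    have hRcard : R.card = q := by
      rw [hR, Finset.card_image_of_injective _ (algebraMap K L).injective, Finset.card_univ, hq]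
    have hTR : T = R := (Finset.eq_of_subset_of_card_le hRT (by omega)).symm
    have hzT : z ∈ T := by simp [hT, hz]
    rw [hTR, hR, Finset.mem_image] at hzT
    obtain ⟨a, _, rfl⟩ := hzT
    exact ⟨a, rfl⟩
  · rintro ⟨a, rfl⟩
    exact hrange a

lemma card_div_two_eq {q : ℕ} (hq2 : 2 ≤ q) (hodd : Odd q) :
    q ^ 2 / 2 = (q - 1) * ((q + 1) / 2) := by
  obtain ⟨t, rfl⟩ := hodd
  have h1 : (2 * t + 1) ^ 2 = 4 * (t * t) + 4 * t + 1 := by ring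
  have h2 : (2 * t + 1 - 1) * ((2 * t + 1 + 1) / 2) = 2 * (t * t) + 2 * t := by
    have e : (2 * t + 1 + 1) / 2 = t + 1 := by omega
    have e2 : 2 * t + 1 - 1 = 2 * t := by omega
    rw [e, e2]; ring
  rw [h1, h2]; omega

lemma exists_sqrt {K L : Type*} [Field K] [Field L] [Fintype K] [Fintype L] [Algebra K L]
    {p e : ℕ} [CharP L p] (hp : p.Prime) (h3 : 3 < p)
    (q : ℕ) (hq : Fintype.card K = q) (hqe : q = p ^ e) (hL : Fintype.card L = q ^ 2)
    (c : K) : ∃ s : L, s ^ 2 = algebraMap K L c := by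
  have hchar : ringChar L ≠ 2 := by rw [ringChar.eq L p]; omega
  rcases eq_or_ne c 0 with rfl | hc
  · exact ⟨0, by simp⟩
  have hq2 : 2 ≤ q := by rw [← hq]; exact Fintype.one_lt_card
  have hodd : Odd q := by rw [hqe]; exact (hp.odd_of_ne_two (by omega)).pow
  have hne : algebraMap K L c ≠ 0 := by
    simp only [ne_eq, map_eq_zero]; exact hc
  have hsq : IsSquare (algebraMap K L c) := by
    rw [FiniteField.isSquare_iff hchar hne, hL, card_div_two_eq hq2 hodd,
      pow_mul, ← map_pow, ← hq, FiniteField.pow_card_sub_one_eq_one c hc, map_one, one_pow]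
  obtain ⟨s, hs⟩ := hsq
  exact ⟨s, by rw [hs, sq]⟩

lemma pow_q_hom {L : Type*} [Field L] {p e : ℕ} [Fact p.Prime] [CharP L p]
    (q : ℕ) (hqe : q = p ^ e) (a b : L) : (a - b) ^ q = a ^ q - b ^ q := by
  subst hqe
  have h1 := map_sub (iterateFrobenius L p e) a b
  simpa only [iterateFrobenius_def] using h1

lemma to_K {K L : Type*} [Field K] [Field L] [Fintype K] [Fintype L] [Algebra K L]
    {p e : ℕ} [Fact p.Prime] [CharP L p]
    (q : ℕ) (hq : Fintype.card K = q) (hqe : q = p ^ e)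
    (y : L) (hy : y ∈ (algebraMap K L).range ∨ y ^ q = 1 - y) :
    ∃ x : K, y * (1 - y) = algebraMap K L x := by
  rcases hy with ⟨a, rfl⟩ | hy
  · exact ⟨a * (1 - a), by rw [map_mul, map_sub, map_one]⟩
  · have key : (y * (1 - y)) ^ q = y * (1 - y) := by
      rw [mul_pow, pow_q_hom q hqe 1 y, one_pow, hy]
      ring
    obtain ⟨x, hx⟩ := (fixed_iff q hq _).mp key
    exact ⟨x, hx.symm⟩

lemma exists_y {K L : Type*} [Field K] [Field L] [Fintype K] [Fintype L] [Algebra K L]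
    {p e : ℕ} [Fact p.Prime] [CharP L p] (h3 : 3 < p)
    (q : ℕ) (hq : Fintype.card K = q) (hqe : q = p ^ e) (hL : Fintype.card L = q ^ 2)
    (x : K) : ∃ y : L, y * (1 - y) = algebraMap K L x ∧
      (y ∈ (algebraMap K L).range ∨ y ^ q = 1 - y) := by
  have hp : p.Prime := Fact.out
  have h2L : (2 : L) ≠ 0 := by
    have : ((2 : ℕ) : L) ≠ 0 := by
      rw [Ne, CharP.cast_eq_zero_iff L p]
      intro hd
      have := Nat.le_of_dvd (by norm_num) hd
      omega
    simpa using this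
  obtain ⟨s, hs⟩ := exists_sqrt hp h3 q hq hqe hL (1 - 4 * x)
  have hs2 : s ^ 2 = 1 - 4 * algebraMap K L x := by
    rw [hs, map_sub, map_one, map_mul, map_ofNat]
  refine ⟨(1 + s) / 2, ?_, ?_⟩
  · field_simp
    linear_combination (-1 : L) * hs2
  · set y := (1 + s) / 2 with hydef
    have hyq : y ^ q - (y ^ q) ^ 2 = y - y ^ 2 := by
      have h1 : y - y ^ 2 = algebraMap K L x := by
        rw [hydef]; field_simp; linear_combination (-1 : L) * hs2
      have h2 : (y - y ^ 2) ^ q = y ^ q - (y ^ q) ^ 2 := by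
        rw [pow_q_hom q hqe, pow_right_comm]
      rw [← h2, h1]
      exact (fixed_iff q hq _).mpr ⟨x, rfl⟩
    have hfac : y ^ q * (1 - y ^ q) = y * (1 - y) := by ring_nf; linear_combination hyq
    rcases quad_factor hfac with h | h
    · left; exact (fixed_iff q hq y).mp h
    · right; exact h

theorem stmt_13 {K L : Type*} [Field K] [Field L] [Fintype K] [Fintype L] [Algebra K L]
    {p e : ℕ} [CharP L p] (hp : p.Prime) (h3 : 3 < p)
    (q : ℕ) (hq : Fintype.card K = q) (hqe : q = p ^ e) (hL : Fintype.card L = q ^ 2)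
    (k : ℤ) (n : ℕ)
    (S : Set L) (hS : S = {y : L | (y ∈ (algebraMap K L).range ∨ y ^ q = 1 - y) ∧ y ≠ 1 / 2})
    (f : L → L)
    (hf : ∀ y : L, f y = ((((k : L) - 1) - ((k : L) - 2) * y) * y ^ n
        - (1 + ((k : L) - 2) * y) * (1 - y) ^ n) / (2 * y - 1)) :
    Function.Bijective (fun x : K => revDickson k n 1 x) ↔
      ((∀ y₁ ∈ S, ∀ y₂ ∈ S, f y₁ = f y₂ → y₁ = y₂ ∨ y₁ = 1 - y₂) ∧
        ∀ y ∈ S, f y ≠ ((k * n - k + 2 : ℤ) : L) / 2 ^ n) := by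
  haveI : Fact p.Prime := ⟨hp⟩
  set ι := algebraMap K L with hι
  have hinj : Function.Injective ι := ι.injective
  have h2L : (2 : L) ≠ 0 := by
    have h' : ((2 : ℕ) : L) ≠ 0 := by
      rw [Ne, CharP.cast_eq_zero_iff L p]
      intro hd
      have := Nat.le_of_dvd (by norm_num) hd
      omega
    simpa using h'
  have h4L : (4 : L) ≠ 0 := by
    intro h
    apply h2L
    have h22 : (4 : L) = 2 * 2 := by norm_num
    rw [h22] at h
    rcases mul_eq_zero.mp h with h | h <;> exact h
  -- y = 1/2 iff 2y - 1 = 0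
  have half_iff : ∀ y : L, y = 1 / 2 ↔ 2 * y - 1 = 0 := by
    intro y
    rw [eq_div_iff h2L]
    constructor <;> intro h <;> linear_combination h
  -- quarter facts
  have hq14 : ι (1 / 4 : K) = (1 / 4 : L) := by
    rw [map_div₀, map_one, map_ofNat]
  have hDL14 : revDickson k n 1 (1 / 4 : L) = ((k * n - k + 2 : ℤ) : L) / 2 ^ n := by
    rw [eq_div_iff (pow_ne_zero n h2L)]
    exact revDickson_quarter k n h2L
  have quarter_y : ∀ y : L, y * (1 - y) = 1 / 4 → y = 1 / 2 := by
    intro y h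
    have hsq : (2 * y - 1) ^ 2 = 0 := by
      have h4 : y * (1 - y) * 4 = 1 := by
        rw [h, one_div, inv_mul_cancel₀ h4L]
      linear_combination -h4
    rw [half_iff]
    exact pow_eq_zero_iff (n := 2) (by norm_num) |>.mp hsq
  -- f evaluated via revDickson
  have f_eq : ∀ y : L, y ≠ 1 / 2 → ∀ x : K, y * (1 - y) = ι x →
      f y = ι (revDickson k n 1 x) := by
    intro y hy x hx
    have hden : 2 * y - 1 ≠ 0 := fun h => hy ((half_iff y).mpr h)
    rw [hf y, div_eq_iff hden]
    have hid := revDickson_identity k n y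
    rw [hx, ← revDickson_map (ι) k n x] at hid
    linear_combination -hid
  have memS : ∀ y : L, (y ∈ (algebraMap K L).range ∨ y ^ q = 1 - y) → y ≠ 1 / 2 → y ∈ S := by
    intro y h1 h2
    rw [hS]; exact ⟨h1, h2⟩
  constructor
  · rintro hbij
    have hDinj : Function.Injective (fun x : K => revDickson k n 1 x) := hbij.1
    constructor
    · intro y₁ hy₁ y₂ hy₂ hff
      rw [hS] at hy₁ hy₂
      obtain ⟨x₁, hx₁⟩ := to_K q hq hqe y₁ hy₁.1
      obtain ⟨x₂, hx₂⟩ := to_K q hq hqe y₂ hy₂.1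
      have e1 := f_eq y₁ hy₁.2 x₁ hx₁
      have e2 := f_eq y₂ hy₂.2 x₂ hx₂
      rw [e1, e2] at hff
      have : x₁ = x₂ := hDinj (hinj hff)
      subst this
      exact quad_factor (by rw [hx₁, hx₂])
    · intro y hy hfv
      rw [hS] at hy
      obtain ⟨x, hx⟩ := to_K q hq hqe y hy.1
      have e1 := f_eq y hy.2 x hx
      rw [e1] at hfv
      have e2 : ι (revDickson k n 1 (1 / 4 : K)) = ((k * n - k + 2 : ℤ) : L) / 2 ^ n := by
        rw [revDickson_map (ι) k n _, hq14, hDL14]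
      have : x = (1 / 4 : K) := hDinj (hinj (by rw [hfv, ← e2]))
      subst this
      exact hy.2 (quarter_y y (by rw [hx, hq14]))
  · rintro ⟨h2to1, hne⟩
    rw [← Finite.injective_iff_bijective]
    intro x₁ x₂ hD
    simp only at hD
    obtain ⟨y₁, hx₁, hT₁⟩ := exists_y h3 q hq hqe hL x₁
    obtain ⟨y₂, hx₂, hT₂⟩ := exists_y h3 q hq hqe hL x₂
    have half_val : ∀ y : L, y = 1 / 2 → y * (1 - y) = 1 / 4 := by
      intro y h
      rw [h]
      field_simp
      linear_combination (2 : L) * 2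
    have quarter_case : ∀ (x : K) (y : L), y * (1 - y) = ι x → y = 1 / 2 → x = 1 / 4 := by
      intro x y hxy hy
      apply hinj
      rw [← hxy, hq14, half_val y hy]
    have key : ∀ (x : K) (y : L), y * (1 - y) = ι x → y ≠ 1 / 2 →
        f y = ι (revDickson k n 1 x) := fun x y hxy hy => f_eq y hy x hxy
    by_cases hy₁ : y₁ = 1 / 2 <;> by_cases hy₂ : y₂ = 1 / 2
    · rw [quarter_case x₁ y₁ hx₁ hy₁, quarter_case x₂ y₂ hx₂ hy₂]
    · -- x₁ = 1/4, y₂ ≠ 1/2 : contradiction with hne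
      exfalso
      have hx14 : x₁ = 1 / 4 := quarter_case x₁ y₁ hx₁ hy₁
      have e2 := key x₂ y₂ hx₂ hy₂
      have e3 : ι (revDickson k n 1 (1 / 4 : K)) = ((k * n - k + 2 : ℤ) : L) / 2 ^ n := by
        rw [revDickson_map (ι) k n _, hq14, hDL14]
      apply hne y₂ (memS y₂ hT₂ hy₂)
      rw [e2, ← hD, hx14, e3]
    · exfalso
      have hx14 : x₂ = 1 / 4 := quarter_case x₂ y₂ hx₂ hy₂
      have e1 := key x₁ y₁ hx₁ hy₁
      have e3 : ι (revDickson k n 1 (1 / 4 : K)) = ((k * n - k + 2 : ℤ) : L) / 2 ^ n := by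
        rw [revDickson_map (ι) k n _, hq14, hDL14]
      apply hne y₁ (memS y₁ hT₁ hy₁)
      rw [e1, hD, hx14, e3]
    · have e1 := key x₁ y₁ hx₁ hy₁
      have e2 := key x₂ y₂ hx₂ hy₂
      have hff : f y₁ = f y₂ := by rw [e1, e2, hD]
      apply hinj
      rw [← hx₁, ← hx₂]
      rcases h2to1 y₁ (memS y₁ hT₁ hy₁) y₂ (memS y₂ hT₂ hy₂) hff with h | h
      · rw [h]
      · rw [h]; ring
end

section
/- Let q = p^e, p > 3, and suppose k ≢ 1 (mod p). If D_{n,k}(1,x) is a permutation polynomial of F_q, then n ≢ 1 (mod 6). -/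
open Finset

private def Aseq (n : ℕ) : ℤ := ∑ i ∈ Finset.range (n / 2 + 1), (-1 : ℤ) ^ i * ((n - i).choose i : ℤ)

private lemma Aseq_zero : Aseq 0 = 1 := by simp [Aseq]
private lemma Aseq_one : Aseq 1 = 1 := by simp [Aseq]

private lemma Aseq_rec (n : ℕ) : Aseq (n + 2) = Aseq (n + 1) - Aseq n := by
  have hsplit : Aseq (n + 2) =
      (∑ j ∈ Finset.range (n / 2 + 1),
        (-1 : ℤ) ^ (j + 1) * (((n + 2) - (j + 1)).choose (j + 1) : ℤ)) + 1 := by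
    unfold Aseq
    have h2 : (n + 2) / 2 + 1 = (n / 2 + 1) + 1 := by omega
    rw [h2, Finset.sum_range_succ']
    simp
  have hpascal : ∀ j ∈ Finset.range (n / 2 + 1),
      (-1 : ℤ) ^ (j + 1) * (((n + 2) - (j + 1)).choose (j + 1) : ℤ)
        = (-1 : ℤ) ^ (j + 1) * ((n - j).choose (j + 1) : ℤ)
          - (-1 : ℤ) ^ j * ((n - j).choose j : ℤ) := by
    intro j hj
    simp only [Finset.mem_range] at hj
    have h1 : (n + 2) - (j + 1) = (n - j) + 1 := by omega
    rw [h1, Nat.choose_succ_succ]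
    push_cast
    ring
  rw [Finset.sum_congr rfl hpascal, Finset.sum_sub_distrib] at hsplit
  have hA1 : Aseq (n + 1) =
      (∑ j ∈ Finset.range ((n + 1) / 2), (-1 : ℤ) ^ (j + 1) * ((n - j).choose (j + 1) : ℤ)) + 1 := by
    unfold Aseq
    rw [Finset.sum_range_succ']
    simp [Nat.succ_sub_succ]
  have hranges : ∑ j ∈ Finset.range (n / 2 + 1), (-1 : ℤ) ^ (j + 1) * ((n - j).choose (j + 1) : ℤ)
      = ∑ j ∈ Finset.range ((n + 1) / 2), (-1 : ℤ) ^ (j + 1) * ((n - j).choose (j + 1) : ℤ) := by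
    rcases Nat.even_or_odd n with ⟨m, rfl⟩ | ⟨m, rfl⟩
    · have h : (m + m) / 2 + 1 = (m + m + 1) / 2 + 1 := by omega
      rw [h, Finset.sum_range_succ]
      have hz : ((m + m) - (m + m + 1) / 2).choose ((m + m + 1) / 2 + 1) = 0 := by
        apply Nat.choose_eq_zero_of_lt
        omega
      rw [hz]
      simp
    · have h : (2 * m + 1) / 2 + 1 = (2 * m + 1 + 1) / 2 := by omega
      rw [h]
  have hAn : ∑ j ∈ Finset.range (n / 2 + 1), (-1 : ℤ) ^ j * ((n - j).choose j : ℤ) = Aseq n := rfl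
  rw [hranges, hAn] at hsplit
  omega

private def tbl (r : ℕ) : ℤ :=
  if r = 0 then 1 else if r = 1 then 1 else if r = 2 then 0
  else if r = 3 then -1 else if r = 4 then -1 else 0

private lemma Aseq_mod (n : ℕ) : Aseq n = tbl (n % 6) := by
  induction n using Nat.strong_induction_on with
  | _ n ih =>
    match n with
    | 0 => simpa [tbl] using Aseq_zero
    | 1 => simpa [tbl] using Aseq_one
    | (m + 2) =>
      rw [Aseq_rec, ih (m + 1) (by omega), ih m (by omega)]
      have h1 : (m + 1) % 6 = (m % 6 + 1) % 6 := by omega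
      have h2 : (m + 2) % 6 = (m % 6 + 2) % 6 := by omega
      rw [h1, h2]
      have hlt : m % 6 < 6 := Nat.mod_lt _ (by norm_num)
      interval_cases h : m % 6 <;> simp [tbl]

private lemma sum_int (k : ℤ) (n : ℕ) (hn : 2 ≤ n) :
    ∑ i ∈ Finset.range (n / 2 + 1),
      (k * ((n - i).choose i : ℤ) -
        (k - 1) * (if i = 0 then 1 else ((n - i).choose i : ℤ) + ((n - i - 1).choose (i - 1) : ℤ)))
        * (-1 : ℤ) ^ i
    = Aseq n + (k - 1) * Aseq (n - 2) := by
  have hterm : ∀ i ∈ Finset.range (n / 2 + 1),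
      (k * ((n - i).choose i : ℤ) -
        (k - 1) * (if i = 0 then 1 else ((n - i).choose i : ℤ) + ((n - i - 1).choose (i - 1) : ℤ)))
        * (-1 : ℤ) ^ i
      = (-1 : ℤ) ^ i * ((n - i).choose i : ℤ)
        - (k - 1) * ((-1 : ℤ) ^ i * (if i = 0 then 0 else ((n - i - 1).choose (i - 1) : ℤ))) := by
    intro i _
    rcases eq_or_ne i 0 with rfl | hi
    · simp
    · simp only [hi, if_neg hi, if_false]
      ring
  rw [Finset.sum_congr rfl hterm, Finset.sum_sub_distrib, ← Finset.mul_sum]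
  have hT : ∑ i ∈ Finset.range (n / 2 + 1),
      (-1 : ℤ) ^ i * (if i = 0 then 0 else ((n - i - 1).choose (i - 1) : ℤ)) = -Aseq (n - 2) := by
    rw [Finset.sum_range_succ']
    simp only [if_neg (Nat.succ_ne_zero _)]
    have h2 : n / 2 = (n - 2) / 2 + 1 := by omega
    have hcongr : ∀ j ∈ Finset.range (n / 2),
        (-1 : ℤ) ^ (j + 1) * ((n - (j + 1) - 1).choose ((j + 1) - 1) : ℤ)
        = -((-1 : ℤ) ^ j * (((n - 2) - j).choose j : ℤ)) := by
      intro j hj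
      have : n - (j + 1) - 1 = (n - 2) - j := by omega
      rw [this]
      simp
      ring
    rw [Finset.sum_congr rfl hcongr, Finset.sum_neg_distrib]
    unfold Aseq
    rw [← h2]
    simp
  rw [hT]
  have : ∑ i ∈ Finset.range (n / 2 + 1), (-1 : ℤ) ^ i * ((n - i).choose i : ℤ) = Aseq n := rfl
  rw [this]
  ring

private lemma rev_at_zero {F : Type*} [Field F] (k : ℤ) (n : ℕ) (hn : n ≠ 0) :
    revDickson k n 1 (0 : F) = 1 := by
  rw [revDickson, if_neg hn]
  rw [Finset.sum_eq_single 0]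
  · simp
  · intro i _ hi
    simp [zero_pow hi]
  · intro h
    simp at h

private lemma rev_at_one {F : Type*} [Field F] (k : ℤ) (n : ℕ) (hn : n ≠ 0) :
    revDickson k n 1 (1 : F) =
      ((∑ i ∈ Finset.range (n / 2 + 1),
        (k * ((n - i).choose i : ℤ) -
          (k - 1) * (if i = 0 then 1 else ((n - i).choose i : ℤ) + ((n - i - 1).choose (i - 1) : ℤ)))
          * (-1 : ℤ) ^ i : ℤ) : F) := by
  rw [revDickson, if_neg hn]
  push_cast
  apply Finset.sum_congr rfl
  intro i _
  simp

theorem stmt_15 {F : Type*} [Field F] [Fintype F] {p e : ℕ} [CharP F p]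
    (hp : p.Prime) (h3 : 3 < p) (hcard : Fintype.card F = p ^ e)
    (k : ℤ) (hk : (k : ZMod p) ≠ 1) (n : ℕ)
    (hPP : Function.Bijective (fun x : F => revDickson k n 1 x)) :
    n % 6 ≠ 1 := by
  intro h6
  have hn0 : n ≠ 0 := by omega
  have hone : revDickson k n 1 (1 : F) = 1 := by
    rcases eq_or_ne n 1 with rfl | hn1
    · rw [rev_at_one k 1 one_ne_zero]
      norm_num
    · have hn2 : 2 ≤ n := by omega
      rw [rev_at_one k n hn0, sum_int k n hn2]
      have hA : Aseq n = 1 := by rw [Aseq_mod, h6]; rfl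
      have hA2 : Aseq (n - 2) = 0 := by
        rw [Aseq_mod]
        have : (n - 2) % 6 = 5 := by omega
        rw [this]; rfl
      rw [hA, hA2]
      norm_num
  have hzero : revDickson k n 1 (0 : F) = 1 := rev_at_zero k n hn0
  have : (0 : F) = 1 := hPP.injective (by simp only [hzero, hone])
  exact zero_ne_one this
end

section
/- In the polynomial expansion −1 − (t − t^q)^{q−1} = Σ_{i=0}^{q²−q} b_i t^i over F_p, writing i = α + βq with 0 ≤ α, β ≤ q−1, the coefficient b_i equals (−1)^{β+1}·C(q−1,β) if α+β = q−1, equals −1 if α = β = 0, and equals 0 otherwise. -/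
theorem stmt_18 (p e : ℕ) (hp : p.Prime) (h3 : 3 < p) (he : 1 ≤ e)
    (q : ℕ) (hq : q = p ^ e) (α β : ℕ) (hα : α ≤ q - 1) (hβ : β ≤ q - 1) :
    (-1 - (Polynomial.X - Polynomial.X ^ q) ^ (q - 1) : Polynomial (ZMod p)).coeff (α + β * q) =
      if α + β = q - 1 then (-1) ^ (β + 1) * ((q - 1).choose β : ZMod p)
      else if α = 0 ∧ β = 0 then -1
      else 0 := by
  have hq1 : 1 < q := by
    subst hq
    exact Nat.one_lt_pow (by omega) (by omega)
  set n := q - 1 with hn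
  have hzero : (α + β * q = 0) ↔ (α = 0 ∧ β = 0) := by
    rw [Nat.add_eq_zero, Nat.mul_eq_zero]
    omega
  have hexp : ((Polynomial.X - Polynomial.X ^ q : Polynomial (ZMod p)) ^ n) =
      ∑ m ∈ Finset.range (n + 1),
        (-1 : Polynomial (ZMod p)) ^ (m + n) * Polynomial.X ^ m * (Polynomial.X ^ q) ^ (n - m) *
          (n.choose m : Polynomial (ZMod p)) :=
    sub_pow _ _ _
  have hcoeff : ∀ m, ((-1 : Polynomial (ZMod p)) ^ (m + n) * Polynomial.X ^ m *
      (Polynomial.X ^ q) ^ (n - m) * (n.choose m : Polynomial (ZMod p))).coeff (α + β * q) =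
      if m + q * (n - m) = α + β * q then ((-1) ^ (m + n) * (n.choose m) : ZMod p) else 0 := by
    intro m
    have heq : ((-1 : Polynomial (ZMod p)) ^ (m + n) * Polynomial.X ^ m *
        (Polynomial.X ^ q) ^ (n - m) * (n.choose m : Polynomial (ZMod p))) =
        Polynomial.C ((-1) ^ (m + n) * (n.choose m) : ZMod p) *
          Polynomial.X ^ (m + q * (n - m)) := by
      rw [← pow_mul, pow_add]
      simp only [map_mul, map_pow, map_neg, map_one, Polynomial.C_eq_natCast]
      ring
    rw [heq, Polynomial.coeff_C_mul, Polynomial.coeff_X_pow]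
    split
    · rename_i h; rw [if_pos h.symm, mul_one]
    · rename_i h; rw [if_neg (fun hh => h hh.symm), mul_zero]
  have key : ((Polynomial.X - Polynomial.X ^ q : Polynomial (ZMod p)) ^ n).coeff (α + β * q) =
      if α + β = n then ((-1) ^ β * (n.choose β) : ZMod p) else 0 := by
    rw [hexp, Polynomial.finset_sum_coeff]
    simp only [hcoeff]
    split
    · rename_i hab
      rw [Finset.sum_eq_single α]
      · have hnb : n - α = β := by omega
        rw [if_pos (by rw [hnb, Nat.mul_comm])]
        have hca : n.choose α = n.choose β := by
          rw [← hnb, Nat.choose_symm (by omega)]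
        rw [hca]
        congr 1
        have h2 : α + n = β + 2 * α := by omega
        rw [h2, pow_add, pow_mul, neg_one_sq, one_pow, mul_one]
      · intro m hm hne
        rw [if_neg]
        intro h
        rw [Finset.mem_range] at hm
        have hm' : m < q := by omega
        have hα' : α < q := by omega
        have : m = α := by
          have h1 := congrArg (· % q) h
          simp only [Nat.add_mul_mod_self_left] at h1
          rw [Nat.add_mul_mod_self_right] at h1
          rwa [Nat.mod_eq_of_lt hm', Nat.mod_eq_of_lt hα'] at h1
        exact hne this
      · intro h
        exact absurd (Finset.mem_range.mpr (by omega)) h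
    · rename_i hab
      apply Finset.sum_eq_zero
      intro m hm
      rw [Finset.mem_range] at hm
      rw [if_neg]
      intro h
      have hm' : m < q := by omega
      have hα' : α < q := by omega
      have hma : m = α := by
        have h1 := congrArg (· % q) h
        simp only [Nat.add_mul_mod_self_left] at h1
        rw [Nat.add_mul_mod_self_right] at h1
        rwa [Nat.mod_eq_of_lt hm', Nat.mod_eq_of_lt hα'] at h1
      subst hma
      have h2 : q * (n - m) = β * q := Nat.add_left_cancel h
      have hb : n - m = β := by
        rw [Nat.mul_comm β q] at h2
        exact Nat.eq_of_mul_eq_mul_left (by omega) h2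
      omega
  rw [Polynomial.coeff_sub, key]
  have hone : ((-1 : Polynomial (ZMod p))).coeff (α + β * q) =
      if α + β * q = 0 then (-1 : ZMod p) else 0 := by
    rw [← Polynomial.C_1, ← Polynomial.C_neg, Polynomial.coeff_C]
  rw [hone]
  by_cases hab : α + β = n
  · rw [if_pos hab, if_neg (by rw [hzero]; omega), if_pos hab]
    rw [pow_succ]
    ring
  · rw [if_neg hab, if_neg hab]
    by_cases h0 : α = 0 ∧ β = 0
    · rw [if_pos (hzero.mpr h0), if_pos h0]
      ring
    · rw [if_neg (fun hh => h0 (hzero.mp hh)), if_neg h0]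
      ring
end
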